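/- For any 3×3 complex matrix B, the quantity Φ₂ := 8|B|² + ⟨B, B*⟩ - 2|tr B|² is nonnegative, where ⟨B,B*⟩ = ∑_{i,j} B_{ij} conj(B_{(4-i)(4-j)}) and |B|² = ∑_{i,j}|B_{ij}|². -/

import Mathlib

set_option maxHeartbeats 1000000 in
/-- For a `3×3` complex matrix `B`,
`Φ₂ = 8|B|² + ⟨B, B*⟩ - 2|tr B|² ≥ 0`, where
`⟨B, B*⟩ = ∑ B_{ij} conj(B_{(4-i)(4-j)})` (1-based; `Fin.rev` in 0-based
indexing). -/
theorem stmt7 (B : Matrix (Fin 3) (Fin 3) ℂ) :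
    0 ≤ 8 * (∑ i, ∑ j, ‖B i j‖ ^ 2)
      + (∑ i, ∑ j, B i j * (starRingEnd ℂ) (B i.rev j.rev)).re
      - 2 * ‖B.trace‖ ^ 2 := by
  simp only [Complex.sq_norm, Matrix.trace, Matrix.diag, Fin.sum_univ_three, Fin.rev,
    Complex.normSq_apply, Complex.add_re, Complex.add_im, Complex.mul_re, Complex.mul_im,
    Complex.conj_re, Complex.conj_im]
  norm_num [show (⟨2, by norm_num⟩ : Fin 3) = 2 from rfl]
  linarith [sq_nonneg ((B 0 0).re - (B 1 1).re), sq_nonneg ((B 1 1).re - (B 2 2).re),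
    sq_nonneg ((B 0 0).re - (B 2 2).re), sq_nonneg (B 0 0).re, sq_nonneg (B 1 1).re,
    sq_nonneg (B 2 2).re,
    sq_nonneg ((B 0 0).im - (B 1 1).im), sq_nonneg ((B 1 1).im - (B 2 2).im),
    sq_nonneg ((B 0 0).im - (B 2 2).im), sq_nonneg (B 0 0).im, sq_nonneg (B 1 1).im,
    sq_nonneg (B 2 2).im,
    sq_nonneg ((B 0 1).re + (B 2 1).re), sq_nonneg (B 0 1).re, sq_nonneg (B 2 1).re,
    sq_nonneg ((B 0 1).im + (B 2 1).im), sq_nonneg (B 0 1).im, sq_nonneg (B 2 1).im,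
    sq_nonneg ((B 1 0).re + (B 1 2).re), sq_nonneg (B 1 0).re, sq_nonneg (B 1 2).re,
    sq_nonneg ((B 1 0).im + (B 1 2).im), sq_nonneg (B 1 0).im, sq_nonneg (B 1 2).im,
    sq_nonneg ((B 0 2).re + (B 2 0).re), sq_nonneg ((B 0 2).im + (B 2 0).im),
    sq_nonneg (B 0 2).re, sq_nonneg (B 0 2).im, sq_nonneg (B 2 0).re, sq_nonneg (B 2 0).im]
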